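/- Let λ, μ ∈ ℂ² (i.e. λ μ : Fin 2 → ℂ), and let H be the 2×2 complex matrix with entries H i j = λ i * conj (λ j) + μ i * conj (μ j). Then det H = ‖λ 0 * μ 1 − λ 1 * μ 0‖², i.e. the determinant of H equals the squared modulus of λ 0 * μ 1 − λ 1 * μ 0. (This is the spinorial identity X_a X^a = V V̄: the Minkowski norm of the vector built from the Dirac spinor (λ, μ) equals |V|² where V = λ 0 * μ 1 − λ 1 * μ 0.) -/

import Mathlib

open Complex

/-- The spinorial identity X_a X^a = V V̄: the determinant of the Hermitian
matrix built from the Dirac spinor (λ, μ) equals |λ₀μ₁ - λ₁μ₀|². -/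
theorem det_spinor_matrix (l m : Fin 2 → ℂ) :
    (Matrix.of fun i j : Fin 2 =>
        l i * (starRingEnd ℂ) (l j) + m i * (starRingEnd ℂ) (m j)).det
      = (‖l 0 * m 1 - l 1 * m 0‖ : ℂ) ^ 2 := by
  have h : ((‖l 0 * m 1 - l 1 * m 0‖ : ℂ)) ^ 2
      = (l 0 * m 1 - l 1 * m 0) * (starRingEnd ℂ) (l 0 * m 1 - l 1 * m 0) := by
    rw [Complex.mul_conj]
    norm_cast
    rw [Complex.sq_norm]
  rw [h, Matrix.det_fin_two]
  simp only [Matrix.of_apply, map_sub, map_mul]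
  ring
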